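/- Let Λ(λ) = lim_{n→∞} (1/n) log 𝔼[e^{λ·X_n}] (which exists for every λ ∈ ℝ^d) and let Λ*(x) = sup_{λ∈ℝ^d} (λ·x − Λ(λ)) be its convex conjugate. Then for every closed set F ⊆ ℝ^d: limsup_{n→∞} (1/n) log ℙ(X_n/n ∈ F) ≤ −inf_{x∈F} Λ*(x). -/

import Mathlib

open MeasureTheory ProbabilityTheory Filter
open scoped ENNReal

noncomputable section

/-- The natural embedding of the lattice `ℤ^d` into Euclidean space `ℝ^d`. -/
def emb (d : ℕ) (z : Fin d → ℤ) : EuclideanSpace ℝ (Fin d) := WithLp.toLp 2 (fun i => (z i : ℝ))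

/-- A finite family `u 0, …, u (m-1)` of lattice vectors is *nice* if for every nonzero
direction `l ∈ ℝ^d` there is some `i` with `l · u i > 0`. -/
def IsNice (d m : ℕ) (u : Fin m → Fin d → ℤ) : Prop :=
  ∀ l : EuclideanSpace ℝ (Fin d), l ≠ 0 → ∃ i : Fin m, 0 < (inner ℝ l (emb d (u i)) : ℝ)

/-- A stationary `ℤ^d`-valued random field `η` on a probability space `(Ω, P)`, with bounded
steps (i), finite-range dependence of range `M` (ii), and the ellipticity condition (iii)
with respect to a nice set of vectors `u 0, …, u (m-1)`. -/
structure DWRE (d : ℕ) (Ω : Type) [MeasurableSpace Ω] where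
  P : Measure Ω
  isProb : IsProbabilityMeasure P
  η : (Fin d → ℤ) → Ω → (Fin d → ℤ)
  meas_η : ∀ z, Measurable (η z)
  stationary : ∀ y : Fin d → ℤ,
    Measure.map (fun ω => fun z => η (z + y) ω) P = Measure.map (fun ω => fun z => η z ω) P
  L : ℝ
  L_pos : 0 < L
  bounded : ∀ z : Fin d → ℤ, ∀ᵐ ω ∂P, ‖emb d (η z ω)‖ ≤ L
  M : ℝ
  M_pos : 0 < M
  finiteRange : ∀ z : Fin d → ℤ,
    Indep (MeasurableSpace.comap (η z) inferInstance)
      (⨆ w ∈ {w : Fin d → ℤ | M < dist (emb d w) (emb d z)},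
        MeasurableSpace.comap (η w) inferInstance) P
  m : ℕ
  u : Fin m → Fin d → ℤ
  nice : IsNice d m u
  c : ℝ
  c_pos : 0 < c
  ellipticity : ∀ (z : Fin d → ℤ) (i : Fin m), ∀ᵐ ω ∂P,
    c < condExp
      (⨆ w ∈ {w : Fin d → ℤ | w ≠ z ∧ dist (emb d w) (emb d z) ≤ M},
        MeasurableSpace.comap (η w) inferInstance) P
      (Set.indicator {ω' | η z ω' = u i} (fun _ => (1 : ℝ))) ω

attribute [instance] DWRE.isProb

namespace DWRE

variable {d : ℕ} {Ω : Type} [MeasurableSpace Ω]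

/-- The deterministic walk in the random environment: `X 0 = 0`, `X (n+1) = X n + η (X n)`. -/
def walk (E : DWRE d Ω) : ℕ → Ω → Fin d → ℤ
  | 0, _ => 0
  | n + 1, ω => walk E n ω + E.η (walk E n ω) ω

/-- The σ-algebra generated by the variables `η z` for `z ∉ S` within distance `M` of `S`. -/
def Fnear (E : DWRE d Ω) (S : Set (Fin d → ℤ)) : MeasurableSpace Ω :=
  ⨆ w ∈ {w : Fin d → ℤ | w ∉ S ∧ ∃ y ∈ S, dist (emb d w) (emb d y) ≤ E.M},
    MeasurableSpace.comap (E.η w) inferInstance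

/-- The hitting time `T_u = inf {n : X n · l ≥ u}` (with value `⊤` if there is no such `n`). -/
def hitT (E : DWRE d Ω) (l : EuclideanSpace ℝ (Fin d)) (u : ℝ) (ω : Ω) : ℕ∞ :=
  sInf {t : ℕ∞ | ∃ n : ℕ, t = (n : ℕ∞) ∧ u ≤ (inner ℝ l (emb d (E.walk n ω)) : ℝ)}

/-- `D_1`, the time of the first jump of the walk over the hyperplane through the origin
orthogonal to `l`, in the direction of `l`. -/
def D1 (E : DWRE d Ω) (l : EuclideanSpace ℝ (Fin d)) (ω : Ω) : ℕ∞ :=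
  sInf {t : ℕ∞ | ∃ n : ℕ, t = (n : ℕ∞) ∧ 1 ≤ n ∧
    (inner ℝ l (emb d (E.walk (n - 1) ω)) : ℝ) < 0 ∧ 0 ≤ (inner ℝ l (emb d (E.walk n ω)) : ℝ)}

/-- `log ℙ(A)`, with `log 0 = -∞`, as an extended real number. -/
def plog (E : DWRE d Ω) (A : Set Ω) : EReal := ENNReal.log (E.P A)

/-- The sequence `n ↦ (1/n) log ℙ(A n)`, as extended real numbers. -/
def rate (E : DWRE d Ω) (A : ℕ → Set Ω) (n : ℕ) : EReal :=
  (((n : ℝ)⁻¹ : ℝ) : EReal) * E.plog (A n)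

/-- `T ≤ x` for an extended natural time `T` and a real bound `x` (in particular `T < ∞`). -/
def timeLE (t : ℕ∞) (x : ℝ) : Prop := ∃ n : ℕ, t = (n : ℕ∞) ∧ (n : ℝ) ≤ x

/-- The sequence `n ↦ (1/n) log 𝔼[exp (λ · X n)]`. -/
def mgfRate (E : DWRE d Ω) (lam : EuclideanSpace ℝ (Fin d)) (n : ℕ) : EReal :=
  (((n : ℝ)⁻¹ * Real.log (∫ ω, Real.exp ((inner ℝ lam (emb d (E.walk n ω)) : ℝ)) ∂E.P) : ℝ) : EReal)

/-- Convexity for `EReal`-valued functions on `ℝ^d`. -/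
def ConvexE {d : ℕ} (f : EuclideanSpace ℝ (Fin d) → EReal) : Prop :=
  ∀ x y : EuclideanSpace ℝ (Fin d), ∀ a b : ℝ, 0 ≤ a → 0 ≤ b → a + b = 1 →
    f (a • x + b • y) ≤ (a : EReal) * f x + (b : EReal) * f y

/-- Concavity for `EReal`-valued functions on `(0, ∞)`. -/
def ConcavePosE (γ : ℝ → EReal) : Prop :=
  ∀ k₁ k₂ : ℝ, 0 < k₁ → 0 < k₂ → ∀ a b : ℝ, 0 ≤ a → 0 ≤ b → a + b = 1 →
    (a : EReal) * γ k₁ + (b : EReal) * γ k₂ ≤ γ (a * k₁ + b * k₂)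

/-- The convex conjugate `Λ*(x) = sup_λ (λ·x − Λ(λ))` of an `EReal`-valued function on `ℝ^d`. -/
def conj {d : ℕ} (Λ : EuclideanSpace ℝ (Fin d) → EReal) (x : EuclideanSpace ℝ (Fin d)) : EReal :=
  ⨆ lam : EuclideanSpace ℝ (Fin d), (((inner ℝ lam x : ℝ)) : EReal) - Λ lam

end DWRE

open DWRE

variable {d : ℕ} {Ω : Type} [MeasurableSpace Ω]
section Helpers

variable {d : ℕ} {Ω : Type} [MeasurableSpace Ω]

lemma emb_add (a b : Fin d → ℤ) : emb d (a + b) = emb d a + emb d b := by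
  ext i
  show ((a i + b i : ℤ) : ℝ) = (a i : ℝ) + (b i : ℝ)
  push_cast; ring

lemma emb_zero : emb d (0 : Fin d → ℤ) = 0 := by
  ext i
  show ((0 : ℤ) : ℝ) = 0
  simp

lemma measurable_walk (E : DWRE d Ω) (n : ℕ) : Measurable (E.walk n) := by
  induction n with
  | zero => exact measurable_const
  | succ n ih =>
    have h1 : Measurable (fun p : Ω × (Fin d → ℤ) => p.2 + E.η p.2 p.1) :=
      measurable_from_prod_countable_left
        (fun z => (measurable_of_countable (fun w => z + w)).comp (E.meas_η z))
    exact h1.comp (measurable_id.prodMk ih)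

lemma walk_norm_le (E : DWRE d Ω) :
    ∀ᵐ ω ∂E.P, ∀ n : ℕ, ‖emb d (E.walk n ω)‖ ≤ n * E.L := by
  have h : ∀ᵐ ω ∂E.P, ∀ z : Fin d → ℤ, ‖emb d (E.η z ω)‖ ≤ E.L :=
    (MeasureTheory.ae_all_iff).2 E.bounded
  filter_upwards [h] with ω hω
  intro n
  induction n with
  | zero => simp [DWRE.walk, emb_zero]
  | succ n ih =>
    have : E.walk (n + 1) ω = E.walk n ω + E.η (E.walk n ω) ω := rfl
    rw [this, emb_add]
    calc ‖emb d (E.walk n ω) + emb d (E.η (E.walk n ω) ω)‖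
        ≤ ‖emb d (E.walk n ω)‖ + ‖emb d (E.η (E.walk n ω) ω)‖ := norm_add_le _ _
      _ ≤ n * E.L + E.L := add_le_add ih (hω _)
      _ = (n + 1 : ℕ) * E.L := by push_cast; ring

lemma measurable_inner_walk (E : DWRE d Ω) (lam : EuclideanSpace ℝ (Fin d)) (n : ℕ) :
    Measurable (fun ω => (inner ℝ lam (emb d (E.walk n ω)) : ℝ)) :=
  (measurable_of_countable (fun z => (inner ℝ lam (emb d z) : ℝ))).comp (measurable_walk E n)

lemma integrable_exp_inner (E : DWRE d Ω) (lam : EuclideanSpace ℝ (Fin d)) (n : ℕ) :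
    MeasureTheory.Integrable
      (fun ω => Real.exp ((inner ℝ lam (emb d (E.walk n ω)) : ℝ))) E.P := by
  refine MeasureTheory.Integrable.mono' (MeasureTheory.integrable_const
      (Real.exp (‖lam‖ * (n * E.L))))
    (Real.measurable_exp.comp (measurable_inner_walk E lam n)).aestronglyMeasurable ?_
  filter_upwards [walk_norm_le E] with ω hω
  rw [Real.norm_eq_abs, abs_of_pos (Real.exp_pos _)]
  refine Real.exp_le_exp.2 ?_
  calc (inner ℝ lam (emb d (E.walk n ω)) : ℝ) ≤ ‖lam‖ * ‖emb d (E.walk n ω)‖ :=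
        real_inner_le_norm _ _
    _ ≤ ‖lam‖ * (n * E.L) := by
        exact mul_le_mul_of_nonneg_left (hω n) (norm_nonneg _)

lemma integral_exp_inner_ge (E : DWRE d Ω) (lam : EuclideanSpace ℝ (Fin d)) (n : ℕ) :
    Real.exp (-(‖lam‖ * (n * E.L))) ≤
      ∫ ω, Real.exp ((inner ℝ lam (emb d (E.walk n ω)) : ℝ)) ∂E.P := by
  have hmono : ∀ᵐ ω ∂E.P, Real.exp (-(‖lam‖ * (n * E.L))) ≤
      Real.exp ((inner ℝ lam (emb d (E.walk n ω)) : ℝ)) := by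
    filter_upwards [walk_norm_le E] with ω hω
    refine Real.exp_le_exp.2 ?_
    have h1 : |(inner ℝ lam (emb d (E.walk n ω)) : ℝ)| ≤ ‖lam‖ * ‖emb d (E.walk n ω)‖ :=
      abs_real_inner_le_norm _ _
    have h2 : ‖lam‖ * ‖emb d (E.walk n ω)‖ ≤ ‖lam‖ * (n * E.L) :=
      mul_le_mul_of_nonneg_left (hω n) (norm_nonneg _)
    have := (abs_le.1 (h1.trans h2)).1
    linarith
  calc Real.exp (-(‖lam‖ * (n * E.L)))
      = ∫ _, Real.exp (-(‖lam‖ * (n * E.L))) ∂E.P := by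
        simp [MeasureTheory.integral_const]
    _ ≤ _ := MeasureTheory.integral_mono_ae (MeasureTheory.integrable_const _)
        (integrable_exp_inner E lam n) hmono

lemma integral_exp_inner_pos (E : DWRE d Ω) (lam : EuclideanSpace ℝ (Fin d)) (n : ℕ) :
    0 < ∫ ω, Real.exp ((inner ℝ lam (emb d (E.walk n ω)) : ℝ)) ∂E.P :=
  lt_of_lt_of_le (Real.exp_pos _) (integral_exp_inner_ge E lam n)

/-- The real-valued version of `mgfRate`. -/
def gfn (E : DWRE d Ω) (lam : EuclideanSpace ℝ (Fin d)) (n : ℕ) : ℝ :=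
  (n : ℝ)⁻¹ * Real.log (∫ ω, Real.exp ((inner ℝ lam (emb d (E.walk n ω)) : ℝ)) ∂E.P)

lemma mgfRate_eq_gfn (E : DWRE d Ω) (lam : EuclideanSpace ℝ (Fin d)) (n : ℕ) :
    E.mgfRate lam n = ((gfn E lam n : ℝ) : EReal) := rfl

lemma gfn_ge (E : DWRE d Ω) (lam : EuclideanSpace ℝ (Fin d)) {n : ℕ} (hn : 1 ≤ n) :
    -(‖lam‖ * E.L) ≤ gfn E lam n := by
  have hnpos : (0 : ℝ) < n := by exact_mod_cast hn
  have hI := integral_exp_inner_pos E lam n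
  have hlog : -(‖lam‖ * ((n : ℝ) * E.L)) ≤
      Real.log (∫ ω, Real.exp ((inner ℝ lam (emb d (E.walk n ω)) : ℝ)) ∂E.P) :=
    (Real.le_log_iff_exp_le hI).2 (integral_exp_inner_ge E lam n)
  have : (n : ℝ)⁻¹ * (-(‖lam‖ * ((n : ℝ) * E.L))) ≤ gfn E lam n :=
    mul_le_mul_of_nonneg_left hlog (by positivity)
  calc -(‖lam‖ * E.L) = (n : ℝ)⁻¹ * (-(‖lam‖ * ((n : ℝ) * E.L))) := by
        field_simp
    _ ≤ _ := this

lemma exists_real_limit (E : DWRE d Ω) (lam : EuclideanSpace ℝ (Fin d)) {Λl : EReal}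
    (hconv : Filter.Tendsto (E.mgfRate lam) Filter.atTop (nhds Λl)) (hne : Λl ≠ ⊤) :
    ∃ ℓ : ℝ, Λl = (ℓ : EReal) ∧ Filter.Tendsto (gfn E lam) Filter.atTop (nhds ℓ) := by
  have hbot : ((-(‖lam‖ * E.L) : ℝ) : EReal) ≤ Λl := by
    refine ge_of_tendsto hconv ?_
    filter_upwards [Filter.eventually_ge_atTop 1] with n hn
    rw [mgfRate_eq_gfn]
    exact_mod_cast gfn_ge E lam hn
  have hne_bot : Λl ≠ ⊥ := fun h => by
    rw [h, le_bot_iff] at hbot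
    exact EReal.coe_ne_bot _ hbot
  refine ⟨Λl.toReal, (EReal.coe_toReal hne hne_bot).symm, ?_⟩
  rw [← EReal.tendsto_coe]
  have : Λl = ((Λl.toReal : ℝ) : EReal) := (EReal.coe_toReal hne hne_bot).symm
  rw [← this]
  exact hconv

lemma chebyshev (E : DWRE d Ω) (lam : EuclideanSpace ℝ (Fin d)) (r : ℝ) (n : ℕ) :
    E.P {ω | (n : ℝ) * r ≤ (inner ℝ lam (emb d (E.walk n ω)) : ℝ)} ≤
      ENNReal.ofReal (Real.exp (-((n : ℝ) * r)) *
        ∫ ω, Real.exp ((inner ℝ lam (emb d (E.walk n ω)) : ℝ)) ∂E.P) := by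
  set f := fun ω => Real.exp ((inner ℝ lam (emb d (E.walk n ω)) : ℝ)) with hf
  have hset : {ω | (n : ℝ) * r ≤ (inner ℝ lam (emb d (E.walk n ω)) : ℝ)} =
      {ω | Real.exp ((n : ℝ) * r) ≤ f ω} := by
    ext ω; simp [hf, Real.exp_le_exp]
  have hcheb := MeasureTheory.mul_meas_ge_le_integral_of_nonneg
    (MeasureTheory.ae_of_all _ (fun ω => (Real.exp_pos _).le : ∀ ω, 0 ≤ f ω))
    (integrable_exp_inner E lam n) (Real.exp ((n : ℝ) * r))
  rw [hset]
  have hfin : E.P {ω | Real.exp ((n : ℝ) * r) ≤ f ω} ≠ ⊤ := MeasureTheory.measure_ne_top _ _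
  rw [ENNReal.le_ofReal_iff_toReal_le hfin (by positivity)]
  rw [Real.exp_neg]
  rw [inv_mul_eq_div, le_div_iff₀ (Real.exp_pos _)]
  have hcheb' : Real.exp ((n : ℝ) * r) * (E.P {ω | Real.exp ((n : ℝ) * r) ≤ f ω}).toReal ≤
      ∫ ω, f ω ∂E.P := hcheb
  linarith [hcheb']

lemma ereal_mul_le {c y : ℝ} (hc : 0 ≤ c) {x : EReal} (h : x ≤ (y : EReal)) :
    ((c : ℝ) : EReal) * x ≤ ((c * y : ℝ) : EReal) := by
  rcases hc.eq_or_lt with rfl | hc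
  · simp
  · induction x with
    | bot => rw [EReal.coe_mul_bot_of_pos (by exact_mod_cast hc)]; exact bot_le
    | coe x =>
      rw [← EReal.coe_mul, EReal.coe_le_coe_iff] at *
      exact mul_le_mul_of_nonneg_left h hc.le
    | top => exact absurd h (by simp)

end Helpers
set_option maxHeartbeats 1000000 in
/-- upper large deviation bound, Theorem `mainmain_theorem`: for every
closed set `F`, `limsup (1/n) log ℙ(X_n/n ∈ F) ≤ − inf_{x ∈ F} Λ*(x)`. -/
theorem ld_upper_bound (hd : 0 < d) (E : DWRE d Ω)
    (Λ : EuclideanSpace ℝ (Fin d) → EReal)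
    (hΛ : ∀ lam : EuclideanSpace ℝ (Fin d),
      Filter.Tendsto (E.mgfRate lam) Filter.atTop (nhds (Λ lam))) :
    ∀ F : Set (EuclideanSpace ℝ (Fin d)), IsClosed F →
      Filter.limsup
          (E.rate fun n => {ω | (n : ℝ)⁻¹ • emb d (E.walk n ω) ∈ F}) Filter.atTop ≤
        -(⨅ x ∈ F, conj Λ x) := by
  intro F hF
  set A : ℕ → Set Ω := fun n => {ω | (n : ℝ)⁻¹ • emb d (E.walk n ω) ∈ F} with hA
  have key : ∀ J : ℝ, (J : EReal) < (⨅ x ∈ F, conj Λ x) →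
      Filter.limsup (E.rate A) Filter.atTop ≤ ((-J : ℝ) : EReal) := by
    intro J hJ
    obtain ⟨J', hJJ', hJ'I⟩ := EReal.exists_between_coe_real hJ
    have hJJ'r : J < J' := by exact_mod_cast hJJ'
    set K : Set (EuclideanSpace ℝ (Fin d)) := F ∩ Metric.closedBall 0 E.L with hK
    have hKcomp : IsCompact K :=
      (isCompact_closedBall (0 : EuclideanSpace ℝ (Fin d)) E.L).of_isClosed_subset
        (hF.inter Metric.isClosed_closedBall) Set.inter_subset_right
    have hx : ∀ x, x ∈ K → ∃ (lm : EuclideanSpace ℝ (Fin d)) (ℓ δ : ℝ),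
        0 < δ ∧ Filter.Tendsto (gfn E lm) Filter.atTop (nhds ℓ) ∧
        ℓ < ((inner ℝ lm x : ℝ) - δ * ‖lm‖) - J' := by
      intro x hxK
      have hIle : (⨅ x ∈ F, conj Λ x) ≤ conj Λ x := iInf₂_le x hxK.1
      have h1 : (J' : EReal) < conj Λ x := lt_of_lt_of_le hJ'I hIle
      rw [conj, lt_iSup_iff] at h1
      obtain ⟨lm, hlam⟩ := h1
      have hne : Λ lm ≠ ⊤ := by
        intro h
        rw [h] at hlam
        rw [EReal.sub_top] at hlam
        exact not_lt_bot hlam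
      obtain ⟨ℓ, hℓeq, hℓt⟩ := exists_real_limit E lm (hΛ lm) hne
      rw [hℓeq, ← EReal.coe_sub, EReal.coe_lt_coe_iff] at hlam
      set c : ℝ := (inner ℝ lm x : ℝ) - ℓ - J' with hc
      have hcpos : 0 < c := by simp only [hc]; linarith
      refine ⟨lm, ℓ, c / (‖lm‖ + 1), div_pos hcpos (by positivity), hℓt, ?_⟩
      have hlt : c / (‖lm‖ + 1) * ‖lm‖ < c := by
        rw [div_mul_eq_mul_div, div_lt_iff₀ (by positivity)]
        nlinarith [norm_nonneg lm]
      simp only [hc] at hlt ⊢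
      linarith
    choose! lam ℓf δf hδ hℓt hℓlt using hx
    have hcov : K ⊆ ⋃ i : K, Metric.ball (i : EuclideanSpace ℝ (Fin d)) (δf i) := fun y hy =>
      Set.mem_iUnion.2 ⟨⟨y, hy⟩, Metric.mem_ball_self (hδ y hy)⟩
    obtain ⟨t, ht⟩ := hKcomp.elim_finite_subcover
      (fun i : K => Metric.ball (i : EuclideanSpace ℝ (Fin d)) (δf i))
      (fun i => Metric.isOpen_ball) hcov
    set s : ℝ := t.card + 1 with hs
    have hs1 : (1 : ℝ) ≤ s := by
      simp only [hs]
      have := Nat.cast_nonneg (α := ℝ) t.card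
      linarith
    set r : K → ℝ := fun i =>
      (inner ℝ (lam i) (i : EuclideanSpace ℝ (Fin d)) : ℝ) - δf i * ‖lam i‖ with hr
    have hnull : ∀ n : ℕ, E.P {ω | (n : ℝ) * E.L < ‖emb d (E.walk n ω)‖} = 0 := by
      intro n
      have h0 : E.P {ω | ¬ ∀ m : ℕ, ‖emb d (E.walk m ω)‖ ≤ m * E.L} = 0 :=
        (MeasureTheory.ae_iff).1 (walk_norm_le E)
      refine MeasureTheory.measure_mono_null ?_ h0
      intro ω hω hall
      exact absurd (hall n) (not_le.2 hω)
    have hev2 : ∀ᶠ n : ℕ in Filter.atTop, (n : ℝ)⁻¹ * Real.log s ≤ J' - J := by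
      have h0 : Filter.Tendsto (fun n : ℕ => Real.log s / n) Filter.atTop (nhds 0) :=
        tendsto_const_div_atTop_nhds_zero_nat _
      filter_upwards [h0.eventually_le_const (by linarith : (0 : ℝ) < J' - J)] with n hn
      calc (n : ℝ)⁻¹ * Real.log s = Real.log s / n := by ring
        _ ≤ J' - J := hn
    have hev3 : ∀ᶠ n : ℕ in Filter.atTop, ∀ i ∈ t, gfn E (lam i) n ≤ r i - J' := by
      rw [Filter.eventually_all_finset]
      intro i _
      exact (hℓt i i.2).eventually_le_const (by
        have := hℓlt i i.2
        simp only [hr]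
        linarith)
    have hmain : ∀ᶠ n : ℕ in Filter.atTop, E.rate A n ≤ ((-J : ℝ) : EReal) := by
      filter_upwards [Filter.eventually_ge_atTop 1, hev2, hev3] with n hn1 hn2 hn3
      have hnpos : (0 : ℝ) < n := by exact_mod_cast hn1
      have hsub : A n ⊆
          (⋃ i ∈ t, {ω | (n : ℝ) * r i ≤ (inner ℝ (lam i) (emb d (E.walk n ω)) : ℝ)})
            ∪ {ω | (n : ℝ) * E.L < ‖emb d (E.walk n ω)‖} := by
        intro ω hω
        by_cases hN : (n : ℝ) * E.L < ‖emb d (E.walk n ω)‖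
        · exact Or.inr hN
        · left
          push_neg at hN
          set y : EuclideanSpace ℝ (Fin d) := (n : ℝ)⁻¹ • emb d (E.walk n ω) with hy
          have hyK : y ∈ K := by
            refine ⟨hω, ?_⟩
            rw [Metric.mem_closedBall, dist_zero_right, hy, norm_smul]
            have h1 : ‖(n : ℝ)⁻¹‖ = (n : ℝ)⁻¹ := by
              rw [Real.norm_eq_abs, abs_of_pos (by positivity)]
            rw [h1]
            calc (n : ℝ)⁻¹ * ‖emb d (E.walk n ω)‖ ≤ (n : ℝ)⁻¹ * ((n : ℝ) * E.L) :=
                  mul_le_mul_of_nonneg_left hN (by positivity)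
              _ = E.L := by field_simp
          obtain ⟨i, hit, hyb⟩ := Set.mem_iUnion₂.1 (ht hyK)
          refine Set.mem_biUnion hit ?_
          show (n : ℝ) * r i ≤ (inner ℝ (lam i) (emb d (E.walk n ω)) : ℝ)
          have hinnery : r i ≤ (inner ℝ (lam i) y : ℝ) := by
            have hdist : dist y (i : EuclideanSpace ℝ (Fin d)) < δf i := Metric.mem_ball.1 hyb
            have h1 : |(inner ℝ (lam i) (y - (i : EuclideanSpace ℝ (Fin d))) : ℝ)| ≤
                ‖lam i‖ * ‖y - (i : EuclideanSpace ℝ (Fin d))‖ := abs_real_inner_le_norm _ _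
            have h2 : ‖y - (i : EuclideanSpace ℝ (Fin d))‖ =
                dist y (i : EuclideanSpace ℝ (Fin d)) := (dist_eq_norm _ _).symm
            have h3 : (inner ℝ (lam i) y : ℝ) =
                (inner ℝ (lam i) (i : EuclideanSpace ℝ (Fin d)) : ℝ) +
                  (inner ℝ (lam i) (y - (i : EuclideanSpace ℝ (Fin d))) : ℝ) := by
              rw [inner_sub_right]; ring
            have h4 : ‖lam i‖ * ‖y - (i : EuclideanSpace ℝ (Fin d))‖ ≤ ‖lam i‖ * δf i := by
              rw [h2]
              exact mul_le_mul_of_nonneg_left hdist.le (norm_nonneg _)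
            have h5 := (abs_le.1 (h1.trans h4)).1
            simp only [hr]
            rw [h3]
            nlinarith [norm_nonneg (lam i)]
          have hin : (inner ℝ (lam i) y : ℝ) =
              (n : ℝ)⁻¹ * (inner ℝ (lam i) (emb d (E.walk n ω)) : ℝ) := by
            rw [hy, real_inner_smul_right]
          rw [hin] at hinnery
          calc (n : ℝ) * r i ≤ (n : ℝ) * ((n : ℝ)⁻¹ *
                (inner ℝ (lam i) (emb d (E.walk n ω)) : ℝ)) :=
              mul_le_mul_of_nonneg_left hinnery (by positivity)
            _ = _ := by field_simp
      have hper : ∀ i ∈ t,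
          E.P {ω | (n : ℝ) * r i ≤ (inner ℝ (lam i) (emb d (E.walk n ω)) : ℝ)} ≤
            ENNReal.ofReal (Real.exp (-((n : ℝ) * J'))) := by
        intro i hi
        refine (chebyshev E (lam i) (r i) n).trans (ENNReal.ofReal_le_ofReal ?_)
        have hI := integral_exp_inner_pos E (lam i) n
        have hg := hn3 i hi
        have hlog : Real.log (∫ ω, Real.exp ((inner ℝ (lam i) (emb d (E.walk n ω)) : ℝ)) ∂E.P)
            ≤ (n : ℝ) * (r i - J') := by
          have h6 := mul_le_mul_of_nonneg_left hg hnpos.le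
          simp only [gfn] at h6
          rwa [← mul_assoc, mul_inv_cancel₀ hnpos.ne', one_mul] at h6
        have hIle := (Real.log_le_iff_le_exp hI).1 hlog
        calc Real.exp (-((n : ℝ) * r i)) *
              ∫ ω, Real.exp ((inner ℝ (lam i) (emb d (E.walk n ω)) : ℝ)) ∂E.P
            ≤ Real.exp (-((n : ℝ) * r i)) * Real.exp ((n : ℝ) * (r i - J')) :=
              mul_le_mul_of_nonneg_left hIle (Real.exp_pos _).le
          _ = Real.exp (-((n : ℝ) * J')) := by rw [← Real.exp_add]; ring_nf
      have hPb : E.P (A n) ≤ ENNReal.ofReal (s * Real.exp (-((n : ℝ) * J'))) := by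
        calc E.P (A n) ≤
            E.P ((⋃ i ∈ t, {ω | (n : ℝ) * r i ≤ (inner ℝ (lam i) (emb d (E.walk n ω)) : ℝ)})
              ∪ {ω | (n : ℝ) * E.L < ‖emb d (E.walk n ω)‖}) := MeasureTheory.measure_mono hsub
          _ ≤ E.P (⋃ i ∈ t, {ω | (n : ℝ) * r i ≤ (inner ℝ (lam i) (emb d (E.walk n ω)) : ℝ)})
              + E.P {ω | (n : ℝ) * E.L < ‖emb d (E.walk n ω)‖} :=
              MeasureTheory.measure_union_le _ _
          _ = E.P (⋃ i ∈ t, {ω | (n : ℝ) * r i ≤ (inner ℝ (lam i) (emb d (E.walk n ω)) : ℝ)}) := by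
              rw [hnull n, add_zero]
          _ ≤ ∑ i ∈ t, E.P {ω | (n : ℝ) * r i ≤ (inner ℝ (lam i) (emb d (E.walk n ω)) : ℝ)} :=
              MeasureTheory.measure_biUnion_finset_le _ _
          _ ≤ ∑ _i ∈ t, ENNReal.ofReal (Real.exp (-((n : ℝ) * J'))) := Finset.sum_le_sum hper
          _ = (t.card : ℝ≥0∞) * ENNReal.ofReal (Real.exp (-((n : ℝ) * J'))) := by
              rw [Finset.sum_const, nsmul_eq_mul]
          _ ≤ ENNReal.ofReal s * ENNReal.ofReal (Real.exp (-((n : ℝ) * J'))) := by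
              refine mul_le_mul_left ?_ _
              rw [← ENNReal.ofReal_natCast]
              exact ENNReal.ofReal_le_ofReal (by simp [hs])
          _ = ENNReal.ofReal (s * Real.exp (-((n : ℝ) * J'))) :=
              (ENNReal.ofReal_mul (by linarith)).symm
      have hplog : E.plog (A n) ≤ ((Real.log s - (n : ℝ) * J' : ℝ) : EReal) := by
        refine (ENNReal.log_monotone hPb).trans ?_
        rw [ENNReal.log_ofReal_of_pos (mul_pos (by linarith) (Real.exp_pos _)),
          EReal.coe_le_coe_iff,
          Real.log_mul (by linarith) (Real.exp_ne_zero _), Real.log_exp]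
        linarith
      have hstep : E.rate A n ≤ (((n : ℝ)⁻¹ * (Real.log s - (n : ℝ) * J') : ℝ) : EReal) :=
        ereal_mul_le (by positivity) hplog
      refine hstep.trans ?_
      rw [EReal.coe_le_coe_iff]
      have h4 : (n : ℝ)⁻¹ * ((n : ℝ) * J') = J' := by field_simp
      calc (n : ℝ)⁻¹ * (Real.log s - (n : ℝ) * J')
          = (n : ℝ)⁻¹ * Real.log s - J' := by rw [mul_sub, h4]
        _ ≤ (J' - J) - J' := by linarith
        _ = -J := by ring
    exact Filter.limsup_le_of_le (by isBoundedDefault) hmain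
  have hIle : (⨅ x ∈ F, conj Λ x) ≤ -Filter.limsup (E.rate A) Filter.atTop := by
    rw [← forall_lt_iff_le]
    intro c hc
    obtain ⟨J, hcJ, hJI⟩ := EReal.exists_between_coe_real hc
    have h2 : (J : EReal) ≤ -Filter.limsup (E.rate A) Filter.atTop :=
      EReal.le_neg_of_le_neg (by rw [← EReal.coe_neg]; exact key J hJI)
    exact lt_of_lt_of_le hcJ h2
  exact EReal.le_neg_of_le_neg hIle
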